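/- For any connected graph G of order at least 2 with maximum degree Δ, HSO(G) ≥ M₁(G)/(√2·Δ), with equality if and only if G is regular. -/

import Mathlib

open SimpleGraph Finset Real

noncomputable def HSO {V : Type*} [Fintype V] (G : SimpleGraph V) : ℝ :=
  letI := Classical.decRel G.Adj
  ∑ e ∈ G.edgeFinset, Sym2.lift
    ⟨fun x y => Real.sqrt ((G.degree x : ℝ) ^ 2 + (G.degree y : ℝ) ^ 2) /
      min (G.degree x : ℝ) (G.degree y : ℝ),
     fun x y => by simp [add_comm, min_comm]⟩ e

noncomputable def SO {V : Type*} [Fintype V] (G : SimpleGraph V) : ℝ :=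
  letI := Classical.decRel G.Adj
  ∑ e ∈ G.edgeFinset, Sym2.lift
    ⟨fun x y => Real.sqrt ((G.degree x : ℝ) ^ 2 + (G.degree y : ℝ) ^ 2),
     fun x y => by simp [add_comm]⟩ e

noncomputable def cDSO {V : Type*} [Fintype V] (G : SimpleGraph V) : ℝ :=
  letI := Classical.decRel G.Adj
  ∑ e ∈ G.edgeFinset, Sym2.lift
    ⟨fun x y => Real.sqrt ((G.degree x : ℝ) ^ 2 + (G.degree y : ℝ) ^ 2) /
      max (G.degree x : ℝ) (G.degree y : ℝ),
     fun x y => by simp [add_comm, max_comm]⟩ e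

noncomputable def M1 {V : Type*} [Fintype V] (G : SimpleGraph V) : ℝ :=
  letI := Classical.decRel G.Adj
  ∑ e ∈ G.edgeFinset, Sym2.lift
    ⟨fun x y => (G.degree x : ℝ) + (G.degree y : ℝ),
     fun x y => by simp [add_comm]⟩ e

def IsRegularGraph {V : Type*} [Fintype V] (G : SimpleGraph V) : Prop :=
  letI := Classical.decRel G.Adj
  ∃ k, G.IsRegularOfDegree k

def addEdge {V : Type*} (G : SimpleGraph V) (u v : V) : SimpleGraph V :=
  G ⊔ SimpleGraph.fromEdgeSet {s(u, v)}



lemma sum_sq_sqrt' (a b : ℝ) (ha : 0 ≤ a) (hb : 0 ≤ b) :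
    a + b ≤ Real.sqrt 2 * Real.sqrt (a^2 + b^2) := by
  rw [← Real.sqrt_mul (by norm_num)]
  rw [show a + b = Real.sqrt ((a+b)^2) from (Real.sqrt_sq (by positivity)).symm]
  exact Real.sqrt_le_sqrt (by nlinarith [sq_nonneg (a-b)])

lemma key_ineq' {a b D : ℝ} (ha : 0 < a) (hb : 0 < b) (haD : a ≤ D) (hbD : b ≤ D) :
    (a + b) / (Real.sqrt 2 * D) ≤ Real.sqrt (a^2+b^2) / min a b := by
  have hD : 0 < D := ha.trans_le haD
  have hmin : 0 < min a b := lt_min ha hb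
  rw [div_le_div_iff₀ (by positivity) hmin]
  have h1 := sum_sq_sqrt' a b ha.le hb.le
  have h2 : min a b ≤ D := (min_le_left a b).trans haD
  calc (a+b) * min a b ≤ (Real.sqrt 2 * Real.sqrt (a^2+b^2)) * D :=
        mul_le_mul h1 h2 hmin.le (by positivity)
    _ = Real.sqrt (a^2+b^2) * (Real.sqrt 2 * D) := by ring

lemma key_eq' {a b D : ℝ} (ha : 0 < a) (hb : 0 < b) (haD : a ≤ D) (hbD : b ≤ D) :
    (a + b) / (Real.sqrt 2 * D) = Real.sqrt (a^2+b^2) / min a b ↔ a = D ∧ b = D := by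
  have hD : 0 < D := ha.trans_le haD
  have hs : 0 < Real.sqrt (a^2+b^2) := by positivity
  constructor
  · intro h
    have hminD : min a b = D := by
      by_contra hne
      have hlt : min a b < D := lt_of_le_of_ne ((min_le_left a b).trans haD) hne
      have h1 : (a+b)/(Real.sqrt 2 * D) ≤ Real.sqrt (a^2+b^2) / D := by
        rw [div_le_div_iff₀ (by positivity) hD]
        have := sum_sq_sqrt' a b ha.le hb.le
        nlinarith
      have h2 : Real.sqrt (a^2+b^2) / D < Real.sqrt (a^2+b^2) / min a b :=
        div_lt_div_of_pos_left hs (lt_min ha hb) hlt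
      linarith
    constructor
    · exact le_antisymm haD (by rw [← hminD]; exact min_le_left a b)
    · exact le_antisymm hbD (by rw [← hminD]; exact min_le_right a b)
  · rintro ⟨ha', hb'⟩
    rw [ha', hb']
    have h2 : Real.sqrt (D^2 + D^2) = Real.sqrt 2 * D := by
      rw [show D^2 + D^2 = 2*D^2 by ring, Real.sqrt_mul (by norm_num), Real.sqrt_sq hD.le]
    rw [h2, min_self]
    have hs2 : Real.sqrt 2 * Real.sqrt 2 = 2 := Real.mul_self_sqrt (by norm_num)
    field_simp
    nlinarith

theorem stmt2 {V : Type*} [Fintype V] (G : SimpleGraph V) [DecidableRel G.Adj]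
    (hconn : G.Connected) (hn : 2 ≤ Fintype.card V) :
    M1 G / (Real.sqrt 2 * G.maxDegree) ≤ HSO G ∧
    (HSO G = M1 G / (Real.sqrt 2 * G.maxDegree) ↔ IsRegularGraph G) := by
  rename_i iD
  have hinst : Classical.decRel G.Adj = iD := Subsingleton.elim _ _
  unfold HSO M1 IsRegularGraph
  subst hinst
  letI : DecidableRel G.Adj := Classical.decRel G.Adj
  have hV : Nonempty V := Fintype.card_pos_iff.mp (by omega)
  have hdeg : ∀ v : V, 0 < G.degree v := by
    intro v
    rw [G.degree_pos_iff_exists_adj]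
    obtain ⟨w, hw⟩ := Fintype.exists_ne_of_one_lt_card (by omega) v
    obtain ⟨p⟩ := hconn v w
    cases p with
    | nil => exact absurd rfl hw
    | cons h _ => exact ⟨_, h⟩
  have hΔ : 0 < G.maxDegree :=
    lt_of_lt_of_le (hdeg (Classical.arbitrary V)) (G.degree_le_maxDegree _)
  have hdegpos : ∀ v, (0:ℝ) < (G.degree v : ℝ) := fun v => by exact_mod_cast hdeg v
  have hdegle : ∀ v, (G.degree v : ℝ) ≤ (G.maxDegree : ℝ) := fun v => by
    exact_mod_cast G.degree_le_maxDegree v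
  have hle : ∀ e ∈ G.edgeFinset,
      (Sym2.lift ⟨fun x y => (G.degree x : ℝ) + (G.degree y : ℝ),
        fun x y => by simp [add_comm]⟩ e) / (Real.sqrt 2 * G.maxDegree)
      ≤ Sym2.lift ⟨fun x y => Real.sqrt ((G.degree x : ℝ) ^ 2 + (G.degree y : ℝ) ^ 2) /
          min (G.degree x : ℝ) (G.degree y : ℝ),
        fun x y => by simp [add_comm, min_comm]⟩ e := by
    intro e he
    clear he
    induction e using Sym2.ind with
    | _ u v =>
      simp only [Sym2.lift_mk]
      exact key_ineq' (hdegpos u) (hdegpos v) (hdegle u) (hdegle v)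
  rw [Finset.sum_div]
  constructor
  · exact Finset.sum_le_sum hle
  · have hiff := Finset.sum_eq_sum_iff_of_le hle
    constructor
    · intro heq
      have hall := hiff.mp heq.symm
      refine ⟨G.maxDegree, fun v => ?_⟩
      obtain ⟨w, hadj⟩ := (G.degree_pos_iff_exists_adj v).mp (hdeg v)
      have he : s(v, w) ∈ G.edgeFinset := by
        rw [SimpleGraph.mem_edgeFinset, SimpleGraph.mem_edgeSet]; exact hadj
      have := hall _ he
      simp only [Sym2.lift_mk] at this
      have hkey := (key_eq' (hdegpos v) (hdegpos w) (hdegle v) (hdegle w)).mp this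
      exact_mod_cast hkey.1
    · rintro ⟨k, hreg⟩
      have hkΔ : G.maxDegree = k := by
        refine le_antisymm (G.maxDegree_le_of_forall_degree_le k fun v => (hreg v).le) ?_
        rw [← hreg (Classical.arbitrary V)]
        exact G.degree_le_maxDegree _
      refine Finset.sum_congr rfl fun e he => ?_
      clear he
      induction e using Sym2.ind with
      | _ u v =>
        simp only [Sym2.lift_mk]
        refine ((key_eq' (hdegpos u) (hdegpos v) (hdegle u) (hdegle v)).mpr ⟨?_, ?_⟩).symm
        · exact_mod_cast (hreg u).trans hkΔ.symm
        · exact_mod_cast (hreg v).trans hkΔ.symm
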